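/- Almost-everywhere formula for the derivative of the negative part of a Lipschitz function: Let N ≥ 1 and let v : ℝ^N → ℝ be Lipschitz. Then for almost every x ∈ ℝ^N (with respect to Lebesgue measure), fderiv ℝ (fun y => max (−v(y)) 0) x = if v(x) < 0 then −(fderiv ℝ v x) else 0. -/

import Mathlib

open MeasureTheory

/-- Almost-everywhere formula for the derivative of the negative part of a
Lipschitz function. -/
theorem fderiv_negpart_ae
    {N : ℕ} (hN : 1 ≤ N)
    (v : EuclideanSpace ℝ (Fin N) → ℝ) (K : NNReal) (hv : LipschitzWith K v) :
    ∀ᵐ x : EuclideanSpace ℝ (Fin N),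
      fderiv ℝ (fun y => max (-v y) 0) x =
        if v x < 0 then -(fderiv ℝ v x) else 0 := by
  have hw : LipschitzWith (max K 0) (fun y => max (-v y) 0) :=
    (hv.neg).max (LipschitzWith.const 0)
  filter_upwards [hw.ae_differentiableAt (μ := volume)] with x hx
  rcases lt_trichotomy (v x) 0 with h | h | h
  · rw [if_pos h]
    have hmem : ∀ᶠ y in nhds x, v y < 0 :=
      (hv.continuous.tendsto x).eventually (eventually_lt_nhds h)
    have heq : (fun y => max (-v y) 0) =ᶠ[nhds x] (fun y => -v y) := by
      filter_upwards [hmem] with y hy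
      exact max_eq_left (by linarith)
    rw [heq.fderiv_eq, fderiv_fun_neg]
  · rw [if_neg (by simp [h])]
    have : IsLocalMin (fun y => max (-v y) 0) x := by
      apply Filter.Eventually.of_forall
      intro y
      simp [h, le_max_right]
    exact this.fderiv_eq_zero
  · rw [if_neg (by linarith)]
    have hmem : ∀ᶠ y in nhds x, 0 < v y :=
      (hv.continuous.tendsto x).eventually (eventually_gt_nhds h)
    have heq : (fun y => max (-v y) 0) =ᶠ[nhds x] (fun _ => (0:ℝ)) := by
      filter_upwards [hmem] with y hy
      exact max_eq_right (by linarith)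
    rw [heq.fderiv_eq, fderiv_fun_const]
    rfl
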